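/- For any integer s ≥ 1, 6s ≤ N_2(K(3;3s)) ≤ 8s − 1, where K(3;3s) is the complete 3s-partite graph with all parts of size 3. -/

import Mathlib

def isAddressing {V : Type*} (G : SimpleGraph V) (N : ℕ)
    (f : V → Fin N → Option Bool) : Prop :=
  ∀ u v : V, G.dist u v =
    (Finset.univ.filter fun j : Fin N =>
      ∃ a b : Bool, f u j = some a ∧ f v j = some b ∧ a ≠ b).card

def multipartiteGraph (a m : ℕ) : SimpleGraph (Fin m × Fin a) where
  Adj u v := u.1 ≠ v.1
  symm := ⟨fun _ _ h => h.symm⟩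
  loopless := ⟨fun _ h => h rfl⟩

section Auxiliary

lemma multi_adj (a m : ℕ) (u v : Fin m × Fin a) :
    (multipartiteGraph a m).Adj u v ↔ u.1 ≠ v.1 := Iff.rfl

lemma multi_dist (a m : ℕ) (hm : 2 ≤ m) (ha : 1 ≤ a) (u v : Fin m × Fin a) :
    (multipartiteGraph a m).dist u v = if u = v then 0 else if u.1 = v.1 then 2 else 1 := by
  by_cases huv : u = v
  · simp [huv]
  by_cases h1 : u.1 = v.1
  · simp only [huv, h1, if_false, if_true]
    have : Nontrivial (Fin m) := Fin.nontrivial_iff_two_le.mpr hm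
    obtain ⟨w1, hw1⟩ := exists_ne u.1
    have hadj1 : (multipartiteGraph a m).Adj u (w1, ⟨0, ha⟩) := fun h => hw1 h.symm
    have hadj2 : (multipartiteGraph a m).Adj (w1, ⟨0, ha⟩) v := by
      rw [multi_adj, ← h1]; exact hw1
    have hle : (multipartiteGraph a m).dist u v ≤ 2 := by
      have := SimpleGraph.dist_le (SimpleGraph.Walk.cons hadj1
        (SimpleGraph.Walk.cons hadj2 SimpleGraph.Walk.nil))
      simpa using this
    have hne0 : (multipartiteGraph a m).dist u v ≠ 0 := by
      intro h
      rw [SimpleGraph.dist_eq_zero_iff_eq_or_not_reachable] at h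
      rcases h with h | h
      · exact huv h
      · exact h ((SimpleGraph.Walk.cons hadj1
          (SimpleGraph.Walk.cons hadj2 SimpleGraph.Walk.nil)).reachable)
    have hne1 : (multipartiteGraph a m).dist u v ≠ 1 := by
      intro h
      rw [SimpleGraph.dist_eq_one_iff_adj, multi_adj] at h
      exact h h1
    omega
  · simp only [huv, h1, if_false]
    rw [SimpleGraph.dist_eq_one_iff_adj]
    exact h1

/-- An explicit addressing of `K(3;3)` of length 7. -/
def baseAddr : Fin 3 × Fin 3 → Fin 7 → Option Bool := fun v =>
  ![![![some false, some false, some false, some false, some false, some false, none],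
     ![some true,  some true,  some false, some false, some false, some false, none],
     ![none,       none,       some true,  some true,  none,       none,       some false]],
    ![![some true,  some false, none,       some false, none,       none,       some false],
     ![some false, some true,  none,       some false, none,       none,       some false],
     ![none,       none,       none,       some true,  some false, some false, some true]],
    ![![none,       none,       some false, some true,  some false, some false, some false],
     ![none,       none,       none,       none,       some true,  some false, some true],
     ![none,       none,       none,       none,       some false, some true,  some true]]]
    v.1 v.2

lemma baseCount (u v : Fin 3 × Fin 3) :
    (Finset.univ.filter fun j : Fin 7 =>
      ∃ a b : Bool, baseAddr u j = some a ∧ baseAddr v j = some b ∧ a ≠ b).card =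
    if u = v then 0 else if u.1 = v.1 then 2 else 1 := by revert u v; decide

def extraAddr (s : ℕ) : Fin s → Fin (s-1) → Option Bool := fun k j =>
  if (j : ℕ) < (k : ℕ) then some true else if (j : ℕ) = (k : ℕ) then some false else none

lemma extraFilter_lt (s : ℕ) (k l : Fin s) (h : (k : ℕ) < (l : ℕ)) :
    (Finset.univ.filter fun j : Fin (s-1) =>
      ∃ a b : Bool, extraAddr s k j = some a ∧ extraAddr s l j = some b ∧ a ≠ b) =
    {⟨(k : ℕ), by omega⟩} := by
  ext j
  simp only [Finset.mem_filter, Finset.mem_univ, true_and, Finset.mem_singleton]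
  constructor
  · rintro ⟨a, b, ha, hb, hab⟩
    unfold extraAddr at ha hb
    by_cases h1 : (j : ℕ) < (k : ℕ)
    · rw [if_pos h1] at ha
      rw [if_pos (h1.trans h)] at hb
      cases Option.some.inj ha; cases Option.some.inj hb
      exact absurd rfl hab
    · rw [if_neg h1] at ha
      by_cases h2 : (j : ℕ) = (k : ℕ)
      · exact Fin.ext h2
      · rw [if_neg h2] at ha
        exact absurd ha (by simp)
  · rintro rfl
    refine ⟨false, true, ?_, ?_, by simp⟩
    · unfold extraAddr; simp
    · unfold extraAddr; simp [h]

lemma extraPred_symm (s : ℕ) (k l : Fin s) (j : Fin (s-1)) :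
    (∃ a b : Bool, extraAddr s k j = some a ∧ extraAddr s l j = some b ∧ a ≠ b) ↔
    (∃ a b : Bool, extraAddr s l j = some a ∧ extraAddr s k j = some b ∧ a ≠ b) := by
  constructor <;> rintro ⟨a, b, ha, hb, hab⟩ <;> exact ⟨b, a, hb, ha, Ne.symm hab⟩

lemma extraCount (s : ℕ) (k l : Fin s) :
    (Finset.univ.filter fun j : Fin (s-1) =>
      ∃ a b : Bool, extraAddr s k j = some a ∧ extraAddr s l j = some b ∧ a ≠ b).card =
    if k = l then 0 else 1 := by
  rcases lt_trichotomy (k : ℕ) (l : ℕ) with h | h | h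
  · rw [extraFilter_lt s k l h, if_neg (by intro hkl; subst hkl; omega)]
    simp
  · have : k = l := Fin.ext h
    subst this
    rw [if_pos rfl, Finset.card_eq_zero, Finset.filter_eq_empty_iff]
    rintro j - ⟨a, b, ha, hb, hab⟩
    rw [ha] at hb
    exact hab (Option.some.inj hb)
  · rw [Finset.filter_congr (fun j _ => extraPred_symm s k l j),
      extraFilter_lt s l k h, if_neg (by intro hkl; subst hkl; omega)]
    simp

def blk (s : ℕ) (i : Fin (3*s)) : Fin s := ⟨(i : ℕ)/3, by have := i.isLt; omega⟩
def pos3 (s : ℕ) (i : Fin (3*s)) : Fin 3 := ⟨(i : ℕ)%3, by omega⟩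

lemma blk_pos3_inj (s : ℕ) (i i' : Fin (3*s)) (h1 : blk s i = blk s i')
    (h2 : pos3 s i = pos3 s i') : i = i' := by
  have e1 : (i : ℕ)/3 = (i' : ℕ)/3 := congrArg Fin.val h1
  have e2 : (i : ℕ)%3 = (i' : ℕ)%3 := congrArg Fin.val h2
  apply Fin.ext; omega

/-- The blow-up addressing of `K(3;3s)` of length `7s + (s-1)`. -/
def combAddr (s : ℕ) (v : Fin (3*s) × Fin 3) :
    (Fin s × Fin 7) ⊕ Fin (s-1) → Option Bool
  | Sum.inl kt => if kt.1 = blk s v.1 then baseAddr (pos3 s v.1, v.2) kt.2 else none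
  | Sum.inr j => extraAddr s (blk s v.1) j

lemma card_filter_sum {α β : Type*} [Fintype α] [Fintype β]
    (p : α ⊕ β → Prop) [DecidablePred p] :
    (Finset.univ.filter p).card =
      (Finset.univ.filter fun a => p (Sum.inl a)).card +
      (Finset.univ.filter fun b => p (Sum.inr b)).card := by
  simp only [Finset.card_filter]
  rw [Fintype.sum_sum_type]

lemma card_filter_equiv {α β : Type*} [Fintype α] [Fintype β]
    (e : α ≃ β) (p : β → Prop) [DecidablePred p] :
    (Finset.univ.filter fun a => p (e a)).card = (Finset.univ.filter p).card := by
  refine Finset.card_bij' (fun a _ => e a) (fun b _ => e.symm b) ?_ ?_ ?_ ?_ <;> simp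

lemma combCount (s : ℕ) (u v : Fin (3*s) × Fin 3) :
    (Finset.univ.filter fun c : (Fin s × Fin 7) ⊕ Fin (s-1) =>
      ∃ a b : Bool, combAddr s u c = some a ∧ combAddr s v c = some b ∧ a ≠ b).card =
    if u = v then 0 else if u.1 = v.1 then 2 else 1 := by
  rw [card_filter_sum]
  have hinr : (Finset.univ.filter fun j : Fin (s-1) =>
      ∃ a b : Bool, combAddr s u (Sum.inr j) = some a ∧
        combAddr s v (Sum.inr j) = some b ∧ a ≠ b).card =
      if blk s u.1 = blk s v.1 then 0 else 1 := extraCount s _ _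
  rw [hinr]
  by_cases hb : blk s u.1 = blk s v.1
  · have hinl : (Finset.univ.filter fun kt : Fin s × Fin 7 =>
        ∃ a b : Bool, combAddr s u (Sum.inl kt) = some a ∧
          combAddr s v (Sum.inl kt) = some b ∧ a ≠ b).card =
        if (pos3 s u.1, u.2) = (pos3 s v.1, v.2) then 0
          else if pos3 s u.1 = pos3 s v.1 then 2 else 1 := by
      rw [Finset.card_filter, Fintype.sum_prod_type]
      rw [Finset.sum_eq_single (blk s u.1)]
      · rw [← baseCount (pos3 s u.1, u.2) (pos3 s v.1, v.2), Finset.card_filter]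
        apply Finset.sum_congr rfl
        intro t _
        congr 1
        apply propext
        constructor <;> rintro ⟨a, b, ha, hb', hab⟩ <;> refine ⟨a, b, ?_, ?_, hab⟩
        · simpa [combAddr] using ha
        · rw [show combAddr s v (Sum.inl (blk s u.1, t)) =
            baseAddr (pos3 s v.1, v.2) t by simp [combAddr, hb]] at hb'
          exact hb'
        · simpa [combAddr] using ha
        · rw [show combAddr s v (Sum.inl (blk s u.1, t)) =
            baseAddr (pos3 s v.1, v.2) t by simp [combAddr, hb]]
          exact hb'
      · intro k _ hk
        apply Finset.sum_eq_zero
        intro t _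
        rw [if_neg]
        rintro ⟨a, b, ha, -, -⟩
        rw [show combAddr s u (Sum.inl (k, t)) = none by simp [combAddr, hk]] at ha
        exact Option.some_ne_none _ ha.symm
      · intro h; exact absurd (Finset.mem_univ _) h
    rw [hinl, if_pos hb]
    by_cases huv : u = v
    · simp [huv]
    · rw [if_neg huv]
      by_cases h1 : u.1 = v.1
      · have hp : pos3 s u.1 = pos3 s v.1 := by rw [h1]
        have hne : (pos3 s u.1, u.2) ≠ (pos3 s v.1, v.2) := by
          intro hcontra
          apply huv
          have := (Prod.mk.injEq _ _ _ _).mp hcontra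
          exact Prod.ext h1 this.2
        rw [if_pos h1, if_neg hne, if_pos hp]
      · have hp : pos3 s u.1 ≠ pos3 s v.1 := by
          intro hcontra
          exact h1 (blk_pos3_inj s u.1 v.1 hb hcontra)
        rw [if_neg h1, if_neg (by simp [hp]), if_neg hp]
  · have hinl : (Finset.univ.filter fun kt : Fin s × Fin 7 =>
        ∃ a b : Bool, combAddr s u (Sum.inl kt) = some a ∧
          combAddr s v (Sum.inl kt) = some b ∧ a ≠ b).card = 0 := by
      rw [Finset.card_eq_zero, Finset.filter_eq_empty_iff]
      rintro ⟨k, t⟩ - ⟨a, b, ha, hb', -⟩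
      by_cases hk : k = blk s u.1
      · rw [show combAddr s v (Sum.inl (k, t)) = none by
          simp only [combAddr]
          rw [if_neg (fun h => hb (hk.symm.trans h))]] at hb'
        exact Option.some_ne_none _ hb'.symm
      · rw [show combAddr s u (Sum.inl (k, t)) = none by simp [combAddr, hk]] at ha
        exact Option.some_ne_none _ ha.symm
    rw [hinl, if_neg hb]
    have h1 : u.1 ≠ v.1 := fun h => hb (by rw [h])
    rw [if_neg (fun h => h1 (congrArg Prod.fst h)), if_neg h1]

lemma lower_bound (s N : ℕ) (hs : 1 ≤ s) (f : Fin (3*s) × Fin 3 → Fin N → Option Bool)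
    (hf : isAddressing (multipartiteGraph 3 (3*s)) N f) : 6*s ≤ N := by
  by_contra hN
  push_neg at hN
  let Φ1 : ((Fin (3*s) × Fin 3) → ℝ) →ₗ[ℝ] (Fin (3*s) → ℝ) :=
    LinearMap.pi (fun i => ∑ p : Fin 3, LinearMap.proj (i, p))
  let Φ2 : ((Fin (3*s) × Fin 3) → ℝ) →ₗ[ℝ] (Fin N → ℝ) :=
    LinearMap.pi (fun j => ∑ v ∈ Finset.univ.filter
      (fun v : Fin (3*s) × Fin 3 => f v j = some false), LinearMap.proj v)
  let Φ := Φ1.prod Φ2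
  have hdim : Module.finrank ℝ ((Fin (3*s) → ℝ) × (Fin N → ℝ)) <
      Module.finrank ℝ ((Fin (3*s) × Fin 3) → ℝ) := by
    rw [Module.finrank_prod, Module.finrank_pi, Module.finrank_pi, Module.finrank_pi]
    simp only [Fintype.card_prod, Fintype.card_fin]
    omega
  have hker := LinearMap.ker_ne_bot_of_finrank_lt (f := Φ) hdim
  rw [Submodule.ne_bot_iff] at hker
  obtain ⟨x, hxker, hx0⟩ := hker
  rw [LinearMap.mem_ker] at hxker
  have hrow : ∀ i : Fin (3*s), ∑ p : Fin 3, x (i, p) = 0 := by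
    intro i
    have h1 : Φ1 x = 0 := congrArg Prod.fst hxker
    have := congrFun h1 i
    simpa [Φ1, LinearMap.pi_apply, LinearMap.sum_apply, LinearMap.proj_apply] using this
  have hfalse : ∀ j : Fin N,
      ∑ v : Fin (3*s) × Fin 3, (if f v j = some false then x v else 0) = 0 := by
    intro j
    have h2 : Φ2 x = 0 := congrArg Prod.snd hxker
    have := congrFun h2 j
    simp only [Φ2, LinearMap.pi_apply, LinearMap.sum_apply, LinearMap.proj_apply,
      Pi.zero_apply] at this
    rw [← Finset.sum_filter]
    exact this
  have htot : ∑ v : Fin (3*s) × Fin 3, x v = 0 := by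
    rw [Fintype.sum_prod_type]
    exact Finset.sum_eq_zero fun i _ => hrow i
  set T := ∑ u : Fin (3*s) × Fin 3, ∑ v : Fin (3*s) × Fin 3,
    ((multipartiteGraph 3 (3*s)).dist u v : ℝ) * x u * x v with hT
  have hd : ∀ u v : Fin (3*s) × Fin 3, ((multipartiteGraph 3 (3*s)).dist u v : ℝ) =
      (1 + (if u.1 = v.1 then (1:ℝ) else 0)) - (if u = v then 2 else 0) := by
    intro u v
    rw [multi_dist 3 (3*s) (by omega) (by omega)]
    by_cases huv : u = v
    · have h1 : u.1 = v.1 := by rw [huv]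
      simp [huv, h1]; norm_num
    · by_cases h1 : u.1 = v.1 <;> simp [huv, h1] <;> norm_num
  have claimA : T = -2 * ∑ v : Fin (3*s) × Fin 3, x v ^ 2 := by
    have per_u : ∀ u : Fin (3*s) × Fin 3,
        ∑ v : Fin (3*s) × Fin 3, ((multipartiteGraph 3 (3*s)).dist u v : ℝ) * x u * x v
        = -2 * x u ^ 2 := by
      intro u
      have hterm : ∀ v : Fin (3*s) × Fin 3,
          ((multipartiteGraph 3 (3*s)).dist u v : ℝ) * x u * x v
          = (x u * x v + (if u.1 = v.1 then x u * x v else 0))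
            - (if u = v then 2 * (x u * x v) else 0) := by
        intro v
        rw [hd u v]
        by_cases huv : u = v
        · have h1 : u.1 = v.1 := by rw [huv]
          simp [huv, h1]; ring
        · by_cases h1 : u.1 = v.1 <;> simp [huv, h1] <;> ring
      simp_rw [hterm]
      rw [Finset.sum_sub_distrib, Finset.sum_add_distrib]
      have e1 : ∑ v : Fin (3*s) × Fin 3, x u * x v = 0 := by
        rw [← Finset.mul_sum, htot, mul_zero]
      have e2 : ∑ v : Fin (3*s) × Fin 3, (if u.1 = v.1 then x u * x v else 0) = 0 := by
        rw [Fintype.sum_prod_type]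
        apply Finset.sum_eq_zero
        intro i _
        by_cases hi : u.1 = i
        · rw [Finset.sum_congr rfl (fun p _ => if_pos hi), ← Finset.mul_sum, hrow i, mul_zero]
        · rw [Finset.sum_congr rfl (fun p _ => if_neg hi)]; simp
      have e3 : ∑ v : Fin (3*s) × Fin 3, (if u = v then 2 * (x u * x v) else 0)
          = 2 * x u ^ 2 := by
        rw [Finset.sum_ite_eq]
        simp; ring
      rw [e1, e2, e3]; ring
    rw [hT, Finset.sum_congr rfl (fun u _ => per_u u), ← Finset.mul_sum]
  have claimB : T = 0 := by
    have hcast : ∀ u v : Fin (3*s) × Fin 3, ((multipartiteGraph 3 (3*s)).dist u v : ℝ) =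
        ∑ j : Fin N, (if (∃ a b : Bool, f u j = some a ∧ f v j = some b ∧ a ≠ b)
          then (1:ℝ) else 0) := by
      intro u v
      rw [hf u v, Finset.card_filter]
      push_cast
      rfl
    have swap : T = ∑ j : Fin N, ∑ u : Fin (3*s) × Fin 3, ∑ v : Fin (3*s) × Fin 3,
        (if (∃ a b : Bool, f u j = some a ∧ f v j = some b ∧ a ≠ b)
          then (1:ℝ) else 0) * x u * x v := by
      rw [hT]
      have step1 : ∀ u : Fin (3*s) × Fin 3,
          ∑ v : Fin (3*s) × Fin 3, ((multipartiteGraph 3 (3*s)).dist u v : ℝ) * x u * x v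
          = ∑ j : Fin N, ∑ v : Fin (3*s) × Fin 3,
            (if (∃ a b : Bool, f u j = some a ∧ f v j = some b ∧ a ≠ b)
              then (1:ℝ) else 0) * x u * x v := by
        intro u
        rw [Finset.sum_congr rfl (fun v _ => by
          rw [hcast u v, Finset.sum_mul, Finset.sum_mul])]
        exact Finset.sum_comm
      rw [Finset.sum_congr rfl (fun u _ => step1 u)]
      exact Finset.sum_comm
    rw [swap]
    apply Finset.sum_eq_zero
    intro j _
    have hsplit : ∀ u v : Fin (3*s) × Fin 3,
        (if (∃ a b : Bool, f u j = some a ∧ f v j = some b ∧ a ≠ b)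
          then (1:ℝ) else 0) * x u * x v
        = (if f u j = some false then x u else 0) * (if f v j = some true then x v else 0)
          + (if f u j = some true then x u else 0) * (if f v j = some false then x v else 0) := by
      intro u v
      rcases hfu : f u j with _ | a
      · simp [hfu]
      rcases hfv : f v j with _ | b
      · simp [hfv]
      rcases a <;> rcases b <;> simp [hfu, hfv] <;> ring
    simp_rw [hsplit]
    rw [Finset.sum_congr rfl (fun u _ => by
      rw [Finset.sum_add_distrib, ← Finset.mul_sum, ← Finset.mul_sum, hfalse j,
        mul_zero, add_zero])]
    rw [← Finset.sum_mul, hfalse j, zero_mul]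
  have hsum : ∑ v : Fin (3*s) × Fin 3, x v ^ 2 = 0 := by
    have := claimA.symm.trans claimB
    linarith [this]
  have hzero : ∀ v : Fin (3*s) × Fin 3, x v = 0 := by
    intro v
    have hnn : ∀ w ∈ (Finset.univ : Finset (Fin (3*s) × Fin 3)), (0:ℝ) ≤ x w ^ 2 :=
      fun w _ => sq_nonneg _
    have := (Finset.sum_eq_zero_iff_of_nonneg hnn).mp hsum v (Finset.mem_univ v)
    exact pow_eq_zero_iff (by norm_num) |>.mp this
  exact hx0 (funext hzero)

lemma upper_mem (s : ℕ) (hs : 1 ≤ s) :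
    (8 * s - 1) ∈ {N : ℕ | ∃ f : Fin (3 * s) × Fin 3 → Fin N → Option Bool,
        isAddressing (multipartiteGraph 3 (3 * s)) N f} := by
  have h7 : 8 * s - 1 = s * 7 + (s - 1) := by omega
  let E : Fin (8 * s - 1) ≃ (Fin s × Fin 7) ⊕ Fin (s - 1) :=
    (finCongr h7).trans (finSumFinEquiv.symm.trans
      (Equiv.sumCongr finProdFinEquiv.symm (Equiv.refl _)))
  refine ⟨fun v j => combAddr s v (E j), ?_⟩
  intro u v
  rw [multi_dist 3 (3 * s) (by omega) (by omega)]
  rw [card_filter_equiv E (fun c => ∃ a b : Bool,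
    combAddr s u c = some a ∧ combAddr s v c = some b ∧ a ≠ b)]
  exact (combCount s u v).symm

end Auxiliary

/-- `6s ≤ N₂(K(3;3s)) ≤ 8s − 1` for every `s ≥ 1`. -/
theorem N2_K3_bounds (s : ℕ) (hs : 1 ≤ s) :
    6 * s ≤ sInf {N : ℕ | ∃ f : Fin (3 * s) × Fin 3 → Fin N → Option Bool,
        isAddressing (multipartiteGraph 3 (3 * s)) N f} ∧
    sInf {N : ℕ | ∃ f : Fin (3 * s) × Fin 3 → Fin N → Option Bool,
        isAddressing (multipartiteGraph 3 (3 * s)) N f} ≤ 8 * s - 1 := by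
  constructor
  · apply le_csInf ⟨8 * s - 1, upper_mem s hs⟩
    rintro N ⟨f, hf⟩
    exact lower_bound s N hs f hf
  · exact Nat.sInf_le (upper_mem s hs)
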